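/- Let X ⊆ ℝ^d be a compact symmetric set (X = −X) containing 0 in its interior, with Lebesgue-negligible boundary. Let h : (ℝ^d)^k → ℝ be nonnegative, measurable, and stationary (h(t_1+t, …, t_k+t) = h(t_1, …, t_k) for all t ∈ ℝ^d), and let h̄(s_1, …, s_{k−1}) = h(0, s_1, …, s_{k−1}). If h̄ ∈ L^p((ℝ^d)^{k−1}) for some p ≥ 1, then ‖h‖^p_{L^p((λX)^k)} / λ^d → ℓ(X) · ‖h̄‖^p_{L^p((ℝ^d)^{k−1})} as λ → ∞, where ℓ denotes Lebesgue measure. -/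

import Mathlib

open MeasureTheory
open scoped Pointwise

/-- asymptotics of the `L^p` norm of a stationary kernel restricted to
`(λX)^k`, formula (4.23) of Lemma 4.9 (without marks).  Here the kernel `h` has
`k + 1` variables and `h̄(s) = h(0, s)`. -/
theorem stmt_2 (d k p : ℕ) (hd : 1 ≤ d) (hp : 1 ≤ p)
    (X : Set (Fin d → ℝ)) (hXc : IsCompact X) (hXsym : X = -X)
    (hX0 : (0 : Fin d → ℝ) ∈ interior X) (hXb : volume (frontier X) = 0)
    (h : (Fin (k + 1) → (Fin d → ℝ)) → ℝ) (hmeas : Measurable h) (hpos : ∀ x, 0 ≤ h x)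
    (hstat : ∀ (t : Fin d → ℝ) (x : Fin (k + 1) → (Fin d → ℝ)),
      h (fun i => x i + t) = h x)
    (hint : Integrable (fun s : Fin k → (Fin d → ℝ) => h (Fin.cons 0 s) ^ p)) :
    Filter.Tendsto
      (fun lam : ℝ =>
        (∫ x in Set.univ.pi (fun _ : Fin (k + 1) => lam • X), h x ^ p) / lam ^ d)
      Filter.atTop
      (nhds ((volume X).toReal * ∫ s : Fin k → (Fin d → ℝ), h (Fin.cons 0 s) ^ p)) := by
  classical
  have hXm : MeasurableSet X := hXc.isClosed.measurableSet
  set H : (Fin k → Fin d → ℝ) → ℝ := fun s => h (Fin.cons 0 s) ^ p with hHdef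
  have Hnn : ∀ s, 0 ≤ H s := fun s => pow_nonneg (hpos _) _
  have hconsmeas : Measurable
      (fun s : Fin k → Fin d → ℝ => (Fin.cons 0 s : Fin (k+1) → Fin d → ℝ)) := by
    apply measurable_pi_lambda
    intro i
    refine Fin.cases ?_ ?_ i
    · exact measurable_const
    · exact fun j => measurable_pi_apply j
  have Hmeas : Measurable H := (hmeas.comp hconsmeas).pow_const p
  set B : ℝ → Set ((Fin d → ℝ) × (Fin k → Fin d → ℝ)) :=
    fun lam => {q | q.1 ∈ X} ∩ ⋂ i, {q | q.1 + lam⁻¹ • q.2 i ∈ X} with hBdef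
  have hBmem : ∀ (lam : ℝ) (q : (Fin d → ℝ) × (Fin k → Fin d → ℝ)),
      q ∈ B lam ↔ (q.1 ∈ X ∧ ∀ i, q.1 + lam⁻¹ • q.2 i ∈ X) := by
    intro lam q
    simp [hBdef, Set.mem_iInter]
  have hBmeas : ∀ lam : ℝ, MeasurableSet (B lam) := by
    intro lam
    refine MeasurableSet.inter (measurable_fst hXm) (MeasurableSet.iInter fun i => ?_)
    have hf : Measurable (fun q : (Fin d → ℝ) × (Fin k → Fin d → ℝ) =>
        q.1 + lam⁻¹ • q.2 i) :=
      measurable_fst.add (((measurable_pi_apply i).comp measurable_snd).const_smul lam⁻¹)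
    exact hf hXm
  set D : ℝ → ((Fin d → ℝ) × (Fin k → Fin d → ℝ)) → ℝ :=
    fun lam => (B lam).indicator (fun q => H q.2) with hDdef
  -- Step 1 : the main change-of-variables identity, for lam > 0
  have main : ∀ lam : ℝ, 0 < lam →
      (∫ x in Set.univ.pi (fun _ : Fin (k + 1) => lam • X), h x ^ p) / lam ^ d
        = ∫ q, D lam q := by
    intro lam hlam
    have hlam' : lam ≠ 0 := hlam.ne'
    have hSm : MeasurableSet (Set.univ.pi (fun _ : Fin (k + 1) => lam • X)) :=
      MeasurableSet.univ_pi fun _ => ((hXc.smul lam).isClosed).measurableSet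
    set G : (Fin (k+1) → Fin d → ℝ) → ℝ :=
      (Set.univ.pi (fun _ : Fin (k + 1) => lam • X)).indicator (fun x => h x ^ p) with hGdef
    have hGmeas : Measurable G := (hmeas.pow_const p).indicator hSm
    have e1 : (∫ x in Set.univ.pi (fun _ : Fin (k + 1) => lam • X), h x ^ p) = ∫ x, G x :=
      (integral_indicator hSm).symm
    have e2 : ∫ x, G x = ∫ q : (Fin d → ℝ) × (Fin k → Fin d → ℝ), G (Fin.cons q.1 q.2) := by
      rw [volume_pi, ← ((measurePreserving_piFinSuccAbove
          (fun _ : Fin (k+1) => (volume : Measure (Fin d → ℝ))) 0).symm).integral_comp']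
      rw [show (Measure.pi fun _ : Fin k => (volume : Measure (Fin d → ℝ))) = volume
          from volume_pi.symm, ← Measure.volume_eq_prod]
      congr 1
      funext q
      congr 1
      simp [MeasurableEquiv.piFinSuccAbove_symm_apply, Fin.insertNthEquiv, Fin.insertNth_zero]
    -- shear
    let τ : ((Fin d → ℝ) × (Fin k → Fin d → ℝ)) ≃ᵐ ((Fin d → ℝ) × (Fin k → Fin d → ℝ)) :=
    { toFun := fun q => (q.1, fun i => q.2 i + q.1)
      invFun := fun q => (q.1, fun i => q.2 i - q.1)
      left_inv := fun q => by ext <;> simp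
      right_inv := fun q => by ext <;> simp
      measurable_toFun := measurable_fst.prodMk <| measurable_pi_lambda _ fun i =>
        ((measurable_pi_apply i).comp measurable_snd).add measurable_fst
      measurable_invFun := measurable_fst.prodMk <| measurable_pi_lambda _ fun i =>
        ((measurable_pi_apply i).comp measurable_snd).sub measurable_fst }
    have mpτ0 : MeasurePreserving
        (fun q : (Fin d → ℝ) × (Fin k → Fin d → ℝ) => (q.1, fun i => q.2 i + q.1))
        ((volume : Measure (Fin d → ℝ)).prod (volume : Measure (Fin k → Fin d → ℝ)))
        ((volume : Measure (Fin d → ℝ)).prod (volume : Measure (Fin k → Fin d → ℝ))) :=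
      MeasurePreserving.skew_product (g := fun (t : Fin d → ℝ) (s : Fin k → Fin d → ℝ) => fun i => s i + t)
        (MeasurePreserving.id _)
        (measurable_pi_lambda _ fun i =>
          ((measurable_pi_apply i).comp measurable_snd).add measurable_fst)
        (Filter.Eventually.of_forall fun t =>
          map_add_right_eq_self (volume : Measure (Fin k → Fin d → ℝ)) (Function.const _ t))
    have mpτ : MeasurePreserving (⇑τ) volume volume := by
      rw [Measure.volume_eq_prod]; exact mpτ0
    have e3 : (∫ q : (Fin d → ℝ) × (Fin k → Fin d → ℝ), G (Fin.cons q.1 q.2))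
        = ∫ q : (Fin d → ℝ) × (Fin k → Fin d → ℝ),
            G (Fin.cons q.1 (fun i => q.2 i + q.1)) :=
      (mpτ.integral_comp' (fun q => G (Fin.cons q.1 q.2))).symm
    -- scaling
    set W : ((Fin d → ℝ) × (Fin k → Fin d → ℝ)) → ℝ :=
      fun q => G (Fin.cons q.1 (fun i => q.2 i + q.1)) with hWdef
    have hWmeas : Measurable W := by
      refine hGmeas.comp (measurable_pi_lambda _ fun i => ?_)
      refine Fin.cases ?_ ?_ i
      · exact measurable_fst
      · exact fun j => ((measurable_pi_apply j).comp measurable_snd).add measurable_fst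
    have e4 : (∫ q : (Fin d → ℝ) × (Fin k → Fin d → ℝ), W q) / lam ^ d
        = ∫ q : (Fin d → ℝ) × (Fin k → Fin d → ℝ), W (lam • q.1, q.2) := by
      have h1 : Measure.map (fun u : Fin d → ℝ => lam • u) volume
          = ENNReal.ofReal ((lam ^ d)⁻¹) • volume := by
        have := Measure.map_addHaar_smul (volume : Measure (Fin d → ℝ)) hlam'
        rw [Module.finrank_fin_fun, abs_of_nonneg (by positivity)] at this
        exact this
      have h2 : Measure.map
          (fun q : (Fin d → ℝ) × (Fin k → Fin d → ℝ) => (lam • q.1, q.2)) volume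
          = ENNReal.ofReal ((lam ^ d)⁻¹) • volume := by
        have h3 := Measure.map_prod_map (volume : Measure (Fin d → ℝ))
          (volume : Measure (Fin k → Fin d → ℝ))
          (f := fun u : Fin d → ℝ => lam • u) (g := id)
          (measurable_id.const_smul lam) measurable_id
        rw [Measure.volume_eq_prod,
          show (fun q : (Fin d → ℝ) × (Fin k → Fin d → ℝ) => (lam • q.1, q.2))
            = Prod.map (fun u : Fin d → ℝ => lam • u) id from rfl,
          ← h3, Measure.map_id, h1]
        ext s hs
        rw [Measure.smul_apply, Measure.prod_apply hs, Measure.prod_apply hs,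
          lintegral_smul_measure, smul_eq_mul]
      have hΨ : Measurable
          (fun q : (Fin d → ℝ) × (Fin k → Fin d → ℝ) => (lam • q.1, q.2)) :=
        (measurable_fst.const_smul lam).prodMk measurable_snd
      have key := integral_map (μ := volume) hΨ.aemeasurable
        (f := W) hWmeas.aestronglyMeasurable
      rw [h2, integral_smul_measure, ENNReal.toReal_ofReal (by positivity)] at key
      rw [← key, smul_eq_mul, div_eq_inv_mul]
    -- pointwise identity
    have e5 : (fun q : (Fin d → ℝ) × (Fin k → Fin d → ℝ) => W (lam • q.1, q.2)) = D lam := by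
      funext q
      have hval : h (Fin.cons (lam • q.1) (fun i => q.2 i + lam • q.1)) = h (Fin.cons 0 q.2) := by
        rw [← hstat (lam • q.1) (Fin.cons 0 q.2)]
        congr 1
        funext i
        refine Fin.cases ?_ ?_ i
        · simp
        · intro j; simp
      have hcond : (Fin.cons (lam • q.1) (fun i => q.2 i + lam • q.1)
            ∈ Set.univ.pi (fun _ : Fin (k + 1) => lam • X)) ↔ q ∈ B lam := by
        rw [Set.mem_univ_pi, Fin.forall_fin_succ]
        simp only [Fin.cons_zero, Fin.cons_succ]
        rw [hBmem lam q]
        refine and_congr (Set.smul_mem_smul_set_iff₀ hlam' X q.1) (forall_congr' fun i => ?_)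
        rw [Set.mem_smul_set_iff_inv_smul_mem₀ hlam']
        simp [smul_add, smul_smul, inv_mul_cancel₀ hlam', add_comm]
      show G (Fin.cons (lam • q.1) (fun i => q.2 i + lam • q.1)) = D lam q
      show (Set.univ.pi (fun _ : Fin (k + 1) => lam • X)).indicator (fun x => h x ^ p)
          (Fin.cons (lam • q.1) (fun i => q.2 i + lam • q.1))
        = (B lam).indicator (fun q => H q.2) q
      simp only [Set.indicator_apply]
      exact if_congr hcond (by rw [hval]) rfl
    rw [e1, e2, e3, e4, e5]
  -- Step 2 : dominated convergence
  have hindX : Integrable (X.indicator fun _ => (1:ℝ)) :=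
    (integrable_indicator_iff hXm).2 (integrableOn_const hXc.measure_lt_top.ne)
  have hDCT : Filter.Tendsto (fun lam : ℝ => ∫ q, D lam q) Filter.atTop
      (nhds (∫ q : (Fin d → ℝ) × (Fin k → Fin d → ℝ),
        X.indicator (fun _ => (1:ℝ)) q.1 * H q.2)) := by
    apply tendsto_integral_filter_of_dominated_convergence
      (bound := fun q : (Fin d → ℝ) × (Fin k → Fin d → ℝ) =>
        X.indicator (fun _ => (1:ℝ)) q.1 * H q.2)
    · exact Filter.Eventually.of_forall fun lam =>
        ((Hmeas.comp measurable_snd).indicator (hBmeas lam)).aestronglyMeasurable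
    · refine Filter.Eventually.of_forall fun lam => Filter.Eventually.of_forall fun q => ?_
      by_cases hq : q ∈ B lam
      · have hq1 : q.1 ∈ X := ((hBmem lam q).1 hq).1
        have hDq : D lam q = H q.2 := Set.indicator_of_mem hq _
        rw [hDq, Set.indicator_of_mem hq1, Real.norm_eq_abs, abs_of_nonneg (Hnn _), one_mul]
      · have hDq : D lam q = 0 := Set.indicator_of_notMem hq _
        rw [hDq, norm_zero]
        exact mul_nonneg (Set.indicator_nonneg (fun _ _ => zero_le_one) _) (Hnn _)
    · rw [Measure.volume_eq_prod]
      exact Integrable.mul_prod hindX hint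
    · have hnull : ∀ᵐ q : (Fin d → ℝ) × (Fin k → Fin d → ℝ), q.1 ∉ frontier X := by
        rw [ae_iff]
        have hset : {q : (Fin d → ℝ) × (Fin k → Fin d → ℝ) | ¬ q.1 ∉ frontier X}
            = (frontier X) ×ˢ (Set.univ : Set (Fin k → Fin d → ℝ)) := by
          ext q; simp
        rw [hset, Measure.volume_eq_prod, Measure.prod_prod, hXb, zero_mul]
      filter_upwards [hnull] with q hq
      by_cases hqX : q.1 ∈ X
      · have hqint : q.1 ∈ interior X := by
          rcases (Set.mem_diff _).mp.mt (hq ∘ id) with _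
          by_contra hni
          exact hq ⟨subset_closure hqX, hni⟩
        have hev : ∀ᶠ lam : ℝ in Filter.atTop, q ∈ B lam := by
          have hi : ∀ i : Fin k, ∀ᶠ lam : ℝ in Filter.atTop, q.1 + lam⁻¹ • q.2 i ∈ X := by
            intro i
            have ht : Filter.Tendsto (fun lam : ℝ => q.1 + lam⁻¹ • q.2 i) Filter.atTop
                (nhds (q.1 + (0:ℝ) • q.2 i)) :=
              tendsto_const_nhds.add (tendsto_inv_atTop_zero.smul_const _)
            rw [zero_smul, add_zero] at ht
            exact ht.eventually (mem_interior_iff_mem_nhds.mp hqint)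
          filter_upwards [Filter.eventually_all.2 hi] with lam hlam2
          exact (hBmem lam q).2 ⟨hqX, hlam2⟩
        have hval : X.indicator (fun _ => (1:ℝ)) q.1 * H q.2 = H q.2 := by
          rw [Set.indicator_of_mem hqX, one_mul]
        rw [hval]
        refine Filter.Tendsto.congr' ?_ tendsto_const_nhds
        filter_upwards [hev] with lam hm
        simp only [hDdef]
        exact (Set.indicator_of_mem hm
          (fun q : (Fin d → ℝ) × (Fin k → Fin d → ℝ) => H q.2)).symm
      · have hzero : ∀ lam : ℝ, D lam q = 0 := fun lam =>
          Set.indicator_of_notMem (fun hmem => hqX ((hBmem lam q).1 hmem).1) _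
        rw [Set.indicator_of_notMem hqX, zero_mul]
        simp only [hzero]
        exact tendsto_const_nhds
  have hlim : (∫ q : (Fin d → ℝ) × (Fin k → Fin d → ℝ),
      X.indicator (fun _ => (1:ℝ)) q.1 * H q.2) = (volume X).toReal * ∫ s, H s := by
    rw [Measure.volume_eq_prod, integral_prod_mul]
    congr 1
    rw [integral_indicator_const (1:ℝ) hXm, smul_eq_mul, mul_one]
    rfl
  rw [hlim] at hDCT
  refine Filter.Tendsto.congr' ?_ hDCT
  filter_upwards [Filter.eventually_gt_atTop 0] with lam hlam
  exact (main lam hlam).symm
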